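/- Let F : ℝᵏ × ℝⁿ → ℝᵏ × ℝⁿ be of the form F(a, x) = (a + f₁(a, x), f₂(a, x)) where f₁ : ℝᵏ × ℝⁿ → ℝᵏ and f₂ : ℝᵏ × ℝⁿ → ℝⁿ are C² maps such that for every a, f₁(a, 0) = 0, f₂(a, 0) = 0, and the partial derivatives of f₁ and f₂ with respect to x vanish at (a, 0). Then for every a₀ ∈ ℝᵏ and every ρ ∈ (0, 1) there exists a neighborhood B of the origin in ℝⁿ such that for all x ∈ B, writing (aₘ, xₘ) = F^[m](a₀, x), the sequence (aₘ) converges in ℝᵏ and ‖xₘ‖ ≤ ρ^(2^m) for all m ≥ 1. -/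

import Mathlib

open Filter Topology

open Metric

set_option maxHeartbeats 1000000

lemma quad_bound {k n m : ℕ}
    (f : EuclideanSpace ℝ (Fin k) × EuclideanSpace ℝ (Fin n) → EuclideanSpace ℝ (Fin m))
    (hf : ContDiff ℝ 2 f) (hf0 : ∀ a, f (a, 0) = 0)
    (hDf : ∀ a, fderiv ℝ (fun x => f (a, x)) 0 = 0)
    (a₀ : EuclideanSpace ℝ (Fin k)) :
    ∃ C : ℝ, 1 ≤ C ∧ ∀ a ∈ closedBall a₀ 1, ∀ x : EuclideanSpace ℝ (Fin n), ‖x‖ ≤ 1 →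
      ‖f (a, x)‖ ≤ C * ‖x‖ ^ 2 := by
  have hfd : Differentiable ℝ f := hf.differentiable (by norm_num)
  have hf' : ContDiff ℝ 1 (fderiv ℝ f) := hf.fderiv_right (by norm_num)
  have hf'd : Differentiable ℝ (fderiv ℝ f) := hf'.differentiable (by norm_num)
  have hf''c : Continuous (fderiv ℝ (fderiv ℝ f)) := hf'.continuous_fderiv (by norm_num)
  set K := closedBall ((a₀, (0 : EuclideanSpace ℝ (Fin n)))) 2 with hKdef
  have hK : IsCompact K := isCompact_closedBall _ _
  obtain ⟨M, hM⟩ := hK.exists_bound_of_continuousOn (f := fderiv ℝ (fderiv ℝ f)) (by exact hf''c.continuousOn)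
  have hM0 : 0 ≤ M := le_trans (norm_nonneg _) (hM _ (mem_closedBall_self (by norm_num)))
  have lip : ∀ p ∈ K, ∀ q ∈ K, ‖fderiv ℝ f p - fderiv ℝ f q‖ ≤ M * ‖p - q‖ := by
    intro p hp q hq
    exact (convex_closedBall _ _).norm_image_sub_le_of_norm_hasFDerivWithin_le
      (fun z _ => (hf'd z).hasFDerivAt.hasFDerivWithinAt)
      (fun z hz => hM z hz) hq hp
  refine ⟨max M 1, le_max_right _ _, fun a ha x hx => ?_⟩
  have hamem : ∀ y : EuclideanSpace ℝ (Fin n), ‖y‖ ≤ 1 → (a, y) ∈ K := by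
    intro y hy
    rw [hKdef, mem_closedBall]
    rw [Prod.dist_eq]
    refine max_le ?_ ?_
    · exact le_trans (mem_closedBall.mp ha) (by norm_num)
    · simpa [dist_eq_norm] using hy.trans (by norm_num)
  set g' : EuclideanSpace ℝ (Fin n) →
      (EuclideanSpace ℝ (Fin n) →L[ℝ] EuclideanSpace ℝ (Fin m)) :=
    fun y => (fderiv ℝ f (a, y) - fderiv ℝ f (a, 0)).comp
      (ContinuousLinearMap.inr ℝ _ _) with hg'def
  have key0 : (fderiv ℝ f (a, 0)).comp
      (ContinuousLinearMap.inr ℝ (EuclideanSpace ℝ (Fin k)) (EuclideanSpace ℝ (Fin n))) = 0 := by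
    have h1 : HasFDerivAt (fun y => f (a, y))
        ((fderiv ℝ f (a, 0)).comp (ContinuousLinearMap.inr ℝ _ _)) 0 :=
      (hfd (a, 0)).hasFDerivAt.comp 0 (hasFDerivAt_prodMk_right a 0)
    rw [← h1.fderiv]; exact hDf a
  have hg : ∀ y, HasFDerivAt (fun y => f (a, y)) (g' y) y := by
    intro y
    have h1 : HasFDerivAt (fun y => f (a, y))
        ((fderiv ℝ f (a, y)).comp (ContinuousLinearMap.inr ℝ _ _)) y :=
      (hfd (a, y)).hasFDerivAt.comp y (hasFDerivAt_prodMk_right a y)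
    have : g' y = (fderiv ℝ f (a, y)).comp (ContinuousLinearMap.inr ℝ _ _) := by
      rw [hg'def]; simp only [ContinuousLinearMap.sub_comp, key0, sub_zero]
    rw [this]; exact h1
  have hg'norm : ∀ y : EuclideanSpace ℝ (Fin n), ‖y‖ ≤ 1 → ‖g' y‖ ≤ M * ‖y‖ := by
    intro y hy
    have h1 : ‖fderiv ℝ f (a, y) - fderiv ℝ f (a, 0)‖ ≤ M * ‖y‖ := by
      have := lip (a, y) (hamem y hy) (a, 0) (hamem 0 (by simp))
      have heq : ‖((a, y) : EuclideanSpace ℝ (Fin k) × EuclideanSpace ℝ (Fin n)) - (a, 0)‖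
          = ‖y‖ := by
        simp [Prod.norm_def]
      rwa [heq] at this
    refine ContinuousLinearMap.opNorm_le_bound _ (mul_nonneg hM0 (norm_nonneg _)) ?_
    intro z
    calc ‖g' y z‖ = ‖(fderiv ℝ f (a, y) - fderiv ℝ f (a, 0)) ((0 : EuclideanSpace ℝ (Fin k)), z)‖ := rfl
    _ ≤ ‖fderiv ℝ f (a, y) - fderiv ℝ f (a, 0)‖ * ‖((0 : EuclideanSpace ℝ (Fin k)), z)‖ :=
        ContinuousLinearMap.le_opNorm _ _
    _ ≤ (M * ‖y‖) * ‖z‖ := by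
        have : ‖((0 : EuclideanSpace ℝ (Fin k)), z)‖ = ‖z‖ := by simp [Prod.norm_def]
        rw [this]
        exact mul_le_mul_of_nonneg_right h1 (norm_nonneg _)
  have hbd : ∀ z ∈ closedBall (0 : EuclideanSpace ℝ (Fin n)) ‖x‖, ‖g' z‖ ≤ M * ‖x‖ := by
    intro z hz
    have hz' : ‖z‖ ≤ ‖x‖ := by simpa [dist_eq_norm] using hz
    exact (hg'norm z (hz'.trans hx)).trans (by nlinarith [norm_nonneg z])
  have hder : ∀ z ∈ closedBall (0 : EuclideanSpace ℝ (Fin n)) ‖x‖,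
      HasFDerivWithinAt (fun y => f (a, y)) (g' z)
        (closedBall (0 : EuclideanSpace ℝ (Fin n)) ‖x‖) z :=
    fun z _ => (hg z).hasFDerivWithinAt
  have hx0 : (0 : EuclideanSpace ℝ (Fin n)) ∈ closedBall (0 : EuclideanSpace ℝ (Fin n)) ‖x‖ :=
    mem_closedBall_self (norm_nonneg _)
  have hxx : x ∈ closedBall (0 : EuclideanSpace ℝ (Fin n)) ‖x‖ := by
    simpa [dist_eq_norm] using le_refl ‖x‖
  have main : ‖f (a, x) - f (a, 0)‖ ≤ (M * ‖x‖) * ‖x - 0‖ :=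
    (convex_closedBall _ _).norm_image_sub_le_of_norm_hasFDerivWithin_le hder hbd hx0 hxx
  rw [hf0 a, sub_zero, sub_zero] at main
  calc ‖f (a, x)‖ ≤ M * ‖x‖ * ‖x‖ := main
  _ ≤ max M 1 * ‖x‖ ^ 2 := by
      have := le_max_left M 1
      nlinarith [norm_nonneg x]

/-- Parametric quadratic-convergence fixed point theorem: for
`F(a,x) = (a + f₁(a,x), f₂(a,x))` with `f₁, f₂` C², vanishing at `x = 0` together with
their partial `x`-derivatives, for every `a₀` and `ρ ∈ (0,1)` there is a neighborhood of
`0` on which the iterates `(aₘ, xₘ) = F^[m](a₀, x)` satisfy: `(aₘ)` converges and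
`‖xₘ‖ ≤ ρ^(2^m)` for `m ≥ 1`. -/
theorem parametric_newton_fixed_point (k n : ℕ)
    (f₁ : EuclideanSpace ℝ (Fin k) × EuclideanSpace ℝ (Fin n) → EuclideanSpace ℝ (Fin k))
    (f₂ : EuclideanSpace ℝ (Fin k) × EuclideanSpace ℝ (Fin n) → EuclideanSpace ℝ (Fin n))
    (hf₁ : ContDiff ℝ 2 f₁) (hf₂ : ContDiff ℝ 2 f₂)
    (hf₁0 : ∀ a, f₁ (a, 0) = 0) (hf₂0 : ∀ a, f₂ (a, 0) = 0)
    (hDf₁ : ∀ a, fderiv ℝ (fun x => f₁ (a, x)) 0 = 0)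
    (hDf₂ : ∀ a, fderiv ℝ (fun x => f₂ (a, x)) 0 = 0)
    (F : EuclideanSpace ℝ (Fin k) × EuclideanSpace ℝ (Fin n) →
        EuclideanSpace ℝ (Fin k) × EuclideanSpace ℝ (Fin n))
    (hF : ∀ p, F p = (p.1 + f₁ p, f₂ p)) :
    ∀ a₀ : EuclideanSpace ℝ (Fin k), ∀ ρ ∈ Set.Ioo (0 : ℝ) 1,
      ∃ ε : ℝ, 0 < ε ∧ ∀ x : EuclideanSpace ℝ (Fin n), ‖x‖ < ε →
        (∃ L, Tendsto (fun m => (F^[m] (a₀, x)).1) atTop (𝓝 L)) ∧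
        ∀ m : ℕ, 1 ≤ m → ‖(F^[m] (a₀, x)).2‖ ≤ ρ ^ (2 ^ m) := by
  intro a₀ ρ hρ
  obtain ⟨hρ0, hρ1⟩ := hρ
  obtain ⟨C₁, hC₁1, hC₁⟩ := quad_bound f₁ hf₁ hf₁0 hDf₁ a₀
  obtain ⟨C₂, hC₂1, hC₂⟩ := quad_bound f₂ hf₂ hf₂0 hDf₂ a₀
  set C := max C₁ C₂ with hCdef
  have hC1 : 1 ≤ C := le_trans hC₁1 (le_max_left _ _)
  have hC0 : 0 < C := lt_of_lt_of_le one_pos hC1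
  set ρ₀ := min ρ (1/2) with hρ₀def
  have hρ₀0 : 0 < ρ₀ := lt_min hρ0 (by norm_num)
  have hρ₀half : ρ₀ ≤ 1/2 := min_le_right _ _
  have hρ₀ρ : ρ₀ ≤ ρ := min_le_left _ _
  have hρ₀1 : ρ₀ ≤ 1 := hρ₀half.trans (by norm_num)
  refine ⟨ρ₀ / C, div_pos hρ₀0 hC0, fun x hx => ?_⟩
  set a : ℕ → EuclideanSpace ℝ (Fin k) := fun m => (F^[m] (a₀, x)).1 with hadef
  set z : ℕ → EuclideanSpace ℝ (Fin n) := fun m => (F^[m] (a₀, x)).2 with hzdef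
  have hrec : ∀ m, a (m+1) = a m + f₁ (a m, z m) ∧ z (m+1) = f₂ (a m, z m) := by
    intro m
    have h := Function.iterate_succ_apply' F m (a₀, x)
    rw [hF] at h
    constructor
    · rw [hadef]; simp only [h]; rfl
    · rw [hzdef]; simp only [h]; rfl
  -- core quantitative step
  have hcore : ∀ m : ℕ, ‖z m‖ ≤ ρ₀ ^ (2^m) / C → ‖a m - a₀‖ ≤ 1 - (1/2:ℝ)^m →
      ‖f₁ (a m, z m)‖ ≤ (1/2:ℝ)^(m+1) ∧ ‖f₂ (a m, z m)‖ ≤ ρ₀ ^ (2^(m+1)) / C := by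
    intro m ihz iha
    have hpow1 : ρ₀ ^ (2^m) ≤ ρ₀ := by
      calc ρ₀ ^ (2^m) ≤ ρ₀ ^ 1 :=
        pow_le_pow_of_le_one hρ₀0.le hρ₀1 Nat.one_le_two_pow
      _ = ρ₀ := pow_one _
    have hz1 : ‖z m‖ ≤ 1 := by
      calc ‖z m‖ ≤ ρ₀ ^ (2^m) / C := ihz
      _ ≤ ρ₀ ^ (2^m) := div_le_self (by positivity) hC1
      _ ≤ ρ₀ := hpow1
      _ ≤ 1 := hρ₀1
    have ham : a m ∈ Metric.closedBall a₀ 1 := by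
      rw [Metric.mem_closedBall, dist_eq_norm]
      refine iha.trans ?_
      have : (0:ℝ) ≤ (1/2:ℝ)^m := by positivity
      linarith
    have hb₁ : ‖f₁ (a m, z m)‖ ≤ C * ‖z m‖^2 := by
      refine (hC₁ (a m) ham (z m) hz1).trans ?_
      have h : C₁ ≤ C := le_max_left _ _
      exact mul_le_mul_of_nonneg_right h (sq_nonneg _)
    have hb₂ : ‖f₂ (a m, z m)‖ ≤ C * ‖z m‖^2 := by
      refine (hC₂ (a m) ham (z m) hz1).trans ?_
      have h : C₂ ≤ C := le_max_right _ _
      exact mul_le_mul_of_nonneg_right h (sq_nonneg _)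
    have hq : C * ‖z m‖^2 ≤ ρ₀ ^ (2^(m+1)) / C := by
      have h1 : ‖z m‖^2 ≤ (ρ₀ ^ (2^m) / C)^2 := pow_le_pow_left₀ (norm_nonneg _) ihz 2
      have h2 : ρ₀ ^ (2^(m+1)) = (ρ₀ ^ (2^m))^2 := by
        rw [← pow_mul, pow_succ]
      have h3 : C * (ρ₀ ^ (2^m) / C)^2 = (ρ₀ ^ (2^m))^2 / C := by
        field_simp
      calc C * ‖z m‖^2 ≤ C * (ρ₀ ^ (2^m) / C)^2 := mul_le_mul_of_nonneg_left h1 hC0.le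
      _ = (ρ₀ ^ (2^m))^2 / C := h3
      _ = ρ₀ ^ (2^(m+1)) / C := by rw [h2]
    have hsmall : ρ₀ ^ (2^(m+1)) / C ≤ (1/2:ℝ)^(m+1) := by
      calc ρ₀ ^ (2^(m+1)) / C ≤ ρ₀ ^ (2^(m+1)) := div_le_self (by positivity) hC1
      _ ≤ ρ₀ ^ (m+1) := pow_le_pow_of_le_one hρ₀0.le hρ₀1 (Nat.le_of_lt Nat.lt_two_pow_self)
      _ ≤ (1/2:ℝ)^(m+1) := pow_le_pow_left₀ hρ₀0.le hρ₀half _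
    exact ⟨hb₁.trans (hq.trans hsmall), hb₂.trans hq⟩
  have key : ∀ m, ‖z m‖ ≤ ρ₀ ^ (2^m) / C ∧ ‖a m - a₀‖ ≤ 1 - (1/2:ℝ)^m := by
    intro m
    induction m with
    | zero =>
      constructor
      · have h : z 0 = x := by rw [hzdef]; simp
        rw [h]
        simpa using hx.le
      · have h : a 0 = a₀ := by rw [hadef]; simp
        simp [h]
    | succ m ih =>
      obtain ⟨ihz, iha⟩ := ih
      obtain ⟨hs₁, hs₂⟩ := hcore m ihz iha
      constructor
      · rw [(hrec m).2]; exact hs₂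
      · rw [(hrec m).1]
        have h : a m + f₁ (a m, z m) - a₀ = (a m - a₀) + f₁ (a m, z m) := by abel
        rw [h]
        calc ‖(a m - a₀) + f₁ (a m, z m)‖ ≤ ‖a m - a₀‖ + ‖f₁ (a m, z m)‖ := norm_add_le _ _
        _ ≤ (1 - (1/2:ℝ)^m) + (1/2:ℝ)^(m+1) := add_le_add iha hs₁
        _ = 1 - (1/2:ℝ)^(m+1) := by ring
  constructor
  · have hcau : CauchySeq a := by
      refine cauchySeq_of_le_geometric (1/2) (1/2) (by norm_num) (fun m => ?_)
      rw [dist_eq_norm, (hrec m).1]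
      have h1 : a m - (a m + f₁ (a m, z m)) = -(f₁ (a m, z m)) := by abel
      rw [h1, norm_neg]
      obtain ⟨ihz, iha⟩ := key m
      calc ‖f₁ (a m, z m)‖ ≤ (1/2:ℝ)^(m+1) := (hcore m ihz iha).1
      _ = (1/2) * (1/2:ℝ)^m := by ring
    exact cauchySeq_tendsto_of_complete hcau
  · intro m _
    obtain ⟨ihz, _⟩ := key m
    calc ‖z m‖ ≤ ρ₀ ^ (2^m) / C := ihz
    _ ≤ ρ₀ ^ (2^m) := div_le_self (by positivity) hC1
    _ ≤ ρ ^ (2^m) := pow_le_pow_left₀ hρ₀0.le hρ₀ρ _
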